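/- For the set {|ψ_{00}⟩, |ψ_{11}⟩, |ψ_{31}⟩, |ψ_{32}⟩} of generalized Bell states in ℂ^4 ⊗ ℂ^4 and any positive semidefinite Hermitian 4×4 matrix E with Tr(E) > 0: if ⟨ψ_i|(E ⊗ I)|ψ_j⟩ = 0 for all distinct pairs i ≠ j, and the average Bob-side post-measurement state ρ_B = (1/(4·Tr(E)/4)) Σ_{i=1}^{4} (1/4)·Tr_A((√E ⊗ I)|ψ_i⟩⟨ψ_i|(√E ⊗ I)) normalized to trace one has von Neumann entropy 2 bits, then E is a positive scalar multiple of the identity. -/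

import Mathlib

open Matrix
open scoped Kronecker ComplexOrder

/-- The generalized Bell state `|ψ_{nm}⟩ = (1/√d) ∑_j e^{2πijn/d} |j⟩ ⊗ |j ⊕_d m⟩`. -/
noncomputable def bell (d : ℕ) (n m : Fin d) : Fin d × Fin d → ℂ :=
  fun p => (1 / Real.sqrt d) *
    Complex.exp (2 * Real.pi * Complex.I * (p.1 : ℕ) * (n : ℕ) / d) *
    (if p.2 = p.1 + m then 1 else 0)

/-- The rank-one projection `|ψ⟩⟨ψ|`. -/
noncomputable def outer {ι : Type*} (ψ : ι → ℂ) : Matrix ι ι ℂ :=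
  Matrix.of fun p q => ψ p * star (ψ q)

/-- Partial trace over the first (Alice's) tensor factor. -/
noncomputable def trA {d : ℕ} (ρ : Matrix (Fin d × Fin d) (Fin d × Fin d) ℂ) :
    Matrix (Fin d) (Fin d) ℂ :=
  Matrix.of fun i j => ∑ k : Fin d, ρ (k, i) (k, j)

/-- The indices of the four Bell states `ψ_{00}, ψ_{11}, ψ_{31}, ψ_{32}`. -/
def bellIdx : Fin 4 → Fin 4 × Fin 4 := ![(0, 0), (1, 1), (3, 1), (3, 2)]

/-- The square root of a positive semidefinite matrix (the former `Matrix.PosSemidef.sqrt`). -/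
noncomputable def psdSqrt {E : Matrix (Fin 4) (Fin 4) ℂ} (hE : E.PosSemidef) :
    Matrix (Fin 4) (Fin 4) ℂ :=
  hE.1.eigenvectorUnitary.1 * diagonal ((↑) ∘ (√·) ∘ hE.1.eigenvalues) *
    (star hE.1.eigenvectorUnitary : Matrix (Fin 4) (Fin 4) ℂ)

/-- The average Bob-side post-measurement state, normalized to trace one:
`ρ_B = (Tr E)⁻¹ ∑ᵢ Tr_A((√E ⊗ I)|ψᵢ⟩⟨ψᵢ|(√E ⊗ I))`. -/
noncomputable def rhoB (E : Matrix (Fin 4) (Fin 4) ℂ) (hE : E.PosSemidef) :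
    Matrix (Fin 4) (Fin 4) ℂ :=
  (E.trace)⁻¹ • ∑ i : Fin 4,
    trA ((psdSqrt hE ⊗ₖ (1 : Matrix (Fin 4) (Fin 4) ℂ)) *
      outer (bell 4 (bellIdx i).1 (bellIdx i).2) *
      (psdSqrt hE ⊗ₖ (1 : Matrix (Fin 4) (Fin 4) ℂ)))

/-- The von Neumann entropy (in bits) of a Hermitian matrix. -/
noncomputable def vnEntropy {d : ℕ} {M : Matrix (Fin d) (Fin d) ℂ}
    (h : M.IsHermitian) : ℝ :=
  -∑ i, h.eigenvalues i * Real.logb 2 (h.eigenvalues i)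

/-! ### Auxiliary lemmas -/

lemma exp_quarter (k : ℕ) : Complex.exp (2 * Real.pi * Complex.I * k / 4) = Complex.I ^ k := by
  induction k with
  | zero => simp
  | succ n ih =>
    have h1 : (2 * (Real.pi:ℂ) * Complex.I * (n+1) / 4) =
        2 * Real.pi * Complex.I * n / 4 + (Real.pi:ℂ)/2 * Complex.I := by ring
    have h2 : Complex.exp ((Real.pi:ℂ)/2 * Complex.I) = Complex.I := by
      have := Complex.exp_mul_I (x := (Real.pi/2 : ℝ))
      push_cast at this ⊢
      rw [this]
      simp [Complex.cos_ofReal_re]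
    push_cast
    rw [h1, Complex.exp_add, ih, h2]; ring

lemma bell_eq (n m : Fin 4) (p : Fin 4 × Fin 4) :
    bell 4 n m p = (1/2) * Complex.I ^ ((p.1 : ℕ) * (n : ℕ)) *
      (if p.2 = p.1 + m then 1 else 0) := by
  unfold bell
  have h4 : Real.sqrt ((4:ℕ):ℝ) = 2 := by
    rw [show (((4:ℕ)):ℝ) = 2^2 by norm_num, Real.sqrt_sq (by norm_num)]
  have h5 : (2 * (Real.pi:ℂ) * Complex.I * (p.1:ℕ) * (n:ℕ) / ((4:ℕ):ℂ)) =
      2 * Real.pi * Complex.I * (((p.1:ℕ) * (n:ℕ) : ℕ):ℂ) / 4 := by push_cast; ring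
  rw [h5, exp_quarter, h4]
  norm_num

lemma conj_two : (starRingEnd ℂ) (2:ℂ) = 2 := Complex.conj_ofNat 2
lemma I3 : Complex.I ^ 3 = -Complex.I := by rw [pow_succ, Complex.I_sq]; ring
lemma I4 : Complex.I ^ 4 = 1 := by rw [show 4 = 2*2 by rfl, pow_mul, Complex.I_sq]; ring
lemma I5 : Complex.I ^ 5 = Complex.I := by rw [show 5 = 1+4 by rfl, pow_add, I4]; ring
lemma I6 : Complex.I ^ 6 = -1 := by rw [show 6 = 2+4 by rfl, pow_add, I4, Complex.I_sq]; ring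
lemma I7 : Complex.I ^ 7 = -Complex.I := by rw [show 7 = 3+4 by rfl, pow_add, I4, I3]; ring
lemma I8 : Complex.I ^ 8 = 1 := by rw [show 8 = 4+4 by rfl, pow_add, I4]; ring
lemma I9 : Complex.I ^ 9 = Complex.I := by rw [show 9 = 5+4 by rfl, pow_add, I4, I5]; ring
lemma I10 : Complex.I ^ 10 = -1 := by rw [show 10 = 6+4 by rfl, pow_add, I4, I6]; ring
lemma I11 : Complex.I ^ 11 = -Complex.I := by rw [show 11 = 7+4 by rfl, pow_add, I4, I7]; ring
lemma I12 : Complex.I ^ 12 = 1 := by rw [show 12 = 8+4 by rfl, pow_add, I4, I8]; ring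
lemma I13 : Complex.I ^ 13 = Complex.I := by rw [show 13 = 9+4 by rfl, pow_add, I4, I9]; ring
lemma I14 : Complex.I ^ 14 = -1 := by rw [show 14 = 10+4 by rfl, pow_add, I4, I10]; ring
lemma I15 : Complex.I ^ 15 = -Complex.I := by rw [show 15 = 11+4 by rfl, pow_add, I4, I11]; ring
lemma I16 : Complex.I ^ 16 = 1 := by rw [show 16 = 12+4 by rfl, pow_add, I4, I12]; ring
lemma I17 : Complex.I ^ 17 = Complex.I := by rw [show 17 = 13+4 by rfl, pow_add, I4, I13]; ring
lemma I18 : Complex.I ^ 18 = -1 := by rw [show 18 = 14+4 by rfl, pow_add, I4, I14]; ring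

lemma outer_posSemidef {ι : Type*} [Fintype ι] [DecidableEq ι] (ψ : ι → ℂ) :
    (outer ψ).PosSemidef := by
  refine Matrix.PosSemidef.of_dotProduct_mulVec_nonneg ?_ ?_
  · ext i j
    simp only [outer, conjTranspose_apply, of_apply, star_mul', star_star]
    ring
  · intro x
    have hz : star x ⬝ᵥ (outer ψ) *ᵥ x
        = star (∑ q, star (ψ q) * x q) * (∑ q, star (ψ q) * x q) := by
      rw [star_sum, Finset.sum_mul_sum]
      simp only [dotProduct, mulVec, outer, of_apply, Pi.star_apply, Finset.mul_sum,
        star_mul', star_star]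
      exact Finset.sum_congr rfl fun p _ => Finset.sum_congr rfl fun q _ => by ring
    rw [hz]
    exact star_mul_self_nonneg _

lemma sum_ite_push {α β : Type*} [Fintype α] [AddCommMonoid β] (c : Prop) [Decidable c] (f : α → β) :
    (∑ x : α, if c then f x else 0) = if c then ∑ x, f x else 0 := by split <;> simp

lemma trA_posSemidef {d : ℕ} {M : Matrix (Fin d × Fin d) (Fin d × Fin d) ℂ}
    (hM : M.PosSemidef) : (trA M).PosSemidef := by
  refine Matrix.PosSemidef.of_dotProduct_mulVec_nonneg ?_ ?_
  · ext i j
    have h1 := hM.1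
    simp only [trA, conjTranspose_apply, of_apply, star_sum]
    refine Finset.sum_congr rfl fun k _ => ?_
    conv_rhs => rw [← h1]
    simp [conjTranspose_apply]
  · intro x
    have hexp : star x ⬝ᵥ (trA M) *ᵥ x
        = ∑ k : Fin d, star (fun p : Fin d × Fin d => if p.1 = k then x p.2 else 0) ⬝ᵥ
            M *ᵥ (fun p : Fin d × Fin d => if p.1 = k then x p.2 else 0) := by
      simp only [dotProduct, mulVec, trA, of_apply, Fintype.sum_prod_type, Pi.star_apply,
        apply_ite, star_zero, ite_mul, mul_ite, zero_mul, mul_zero,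
        sum_ite_push, Finset.sum_ite_eq, Finset.sum_ite_eq', Finset.mem_univ, if_true,
        Finset.mul_sum, Finset.sum_mul]
      conv_rhs => rw [Finset.sum_comm]
      refine Finset.sum_congr rfl fun a _ => ?_
      rw [Finset.sum_comm]
    rw [hexp]
    exact Finset.sum_nonneg fun k _ => hM.dotProduct_mulVec_nonneg _

lemma trA_conj {d : ℕ} (M : Matrix (Fin d) (Fin d) ℂ) (ψ : Fin d × Fin d → ℂ) (i j : Fin d) :
    trA ((M ⊗ₖ (1 : Matrix (Fin d) (Fin d) ℂ)) * outer ψ * (M ⊗ₖ 1)) i j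
      = ∑ a, ∑ b, ψ (a, i) * star (ψ (b, j)) * (M * M) b a := by
  simp only [trA, Matrix.of_apply, Matrix.mul_apply, outer, kroneckerMap_apply,
    Matrix.one_apply, Fintype.sum_prod_type, mul_ite, ite_mul, mul_zero, zero_mul,
    mul_one, one_mul, Finset.sum_ite_eq, Finset.sum_ite_eq', Finset.mem_univ, if_true,
    Finset.sum_mul, Finset.mul_sum]
  rw [Finset.sum_comm]
  conv_rhs => rw [Finset.sum_comm]
  refine Finset.sum_congr rfl fun y _ => ?_
  rw [Finset.sum_comm]
  exact Finset.sum_congr rfl fun b _ =>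
    Finset.sum_congr rfl fun k _ => by ring

lemma kron_one_ct {d : ℕ} {M : Matrix (Fin d) (Fin d) ℂ} (h : M.IsHermitian) :
    (M ⊗ₖ (1 : Matrix (Fin d) (Fin d) ℂ))ᴴ = M ⊗ₖ 1 := by
  ext p q
  by_cases hc : p.2 = q.2
  · simp [conjTranspose_apply, kroneckerMap_apply, Matrix.one_apply, hc, star_mul', h.apply]
  · simp [conjTranspose_apply, kroneckerMap_apply, Matrix.one_apply, hc, Ne.symm hc,
      star_mul', h.apply]

lemma f_nonneg {x : ℝ} (hx : 0 ≤ x) : 0 ≤ x * Real.log (4*x) - x + 1/4 := by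
  rcases eq_or_lt_of_le hx with h | h
  · simp [← h]
  · have h4 : (0:ℝ) < 4*x := by linarith
    have hl : Real.log (1/(4*x)) ≤ 1/(4*x) - 1 :=
      Real.log_le_sub_one_of_pos (by positivity)
    have hlog : Real.log (1/(4*x)) = - Real.log (4*x) := by
      rw [one_div, Real.log_inv]
    rw [hlog] at hl
    have := mul_le_mul_of_nonneg_left hl (le_of_lt h)
    have hx4 : x * (1/(4*x) - 1) = 1/4 - x := by field_simp
    nlinarith

lemma f_eq_zero {x : ℝ} (hx : 0 ≤ x) (h0 : x * Real.log (4*x) - x + 1/4 = 0) : x = 1/4 := by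
  rcases eq_or_lt_of_le hx with h | h
  · exfalso; rw [← h] at h0; norm_num at h0
  · by_contra hne
    have h4 : (0:ℝ) < 4*x := by linarith
    have hne' : 1/(4*x) ≠ 1 := by
      intro hh
      apply hne
      field_simp at hh
      linarith
    have hl : Real.log (1/(4*x)) < 1/(4*x) - 1 :=
      Real.log_lt_sub_one_of_pos (by positivity) hne'
    rw [one_div, Real.log_inv] at hl
    have := mul_lt_mul_of_pos_left hl h
    have hx4 : x * ((4*x)⁻¹ - 1) = 1/4 - x := by field_simp
    nlinarith

lemma maxent {lam : Fin 4 → ℝ} (h0 : ∀ i, 0 ≤ lam i) (h1 : ∑ i, lam i = 1)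
    (h2 : -∑ i, lam i * Real.logb 2 (lam i) = 2) : ∀ i, lam i = 1/4 := by
  have hsplit : ∀ i, lam i * Real.log (4 * lam i)
      = lam i * Real.log 4 + lam i * Real.log (lam i) := by
    intro i
    rcases eq_or_lt_of_le (h0 i) with h | h
    · simp [← h]
    · rw [Real.log_mul (by norm_num) (ne_of_gt h)]; ring
  have hlog : ∑ i, lam i * Real.log (lam i) = - Real.log 4 := by
    have h2' : ∑ i, lam i * Real.logb 2 (lam i) = -2 := by linarith
    have : ∀ i, lam i * Real.logb 2 (lam i) = (lam i * Real.log (lam i)) / Real.log 2 := by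
      intro i; rw [Real.logb]; ring
    rw [Finset.sum_congr rfl (fun i _ => this i), ← Finset.sum_div] at h2'
    have hl2 : Real.log 2 ≠ 0 := by
      have := Real.log_pos (by norm_num : (1:ℝ) < 2)
      linarith
    field_simp at h2'
    rw [h2']
    rw [show (4:ℝ) = 2^2 by norm_num, Real.log_pow]
    push_cast; ring
  have hsum : ∑ i, (lam i * Real.log (4 * lam i) - lam i + 1/4) = 0 := by
    simp only [hsplit]
    rw [Finset.sum_add_distrib]
    simp only [Finset.sum_sub_distrib, Finset.sum_add_distrib, ← Finset.sum_mul,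
      ← Finset.mul_sum]
    rw [hlog]
    simp [Finset.sum_const, ← Finset.sum_mul]
    rw [h1]
    ring
  intro i
  have := (Finset.sum_eq_zero_iff_of_nonneg
    (fun i _ => f_nonneg (h0 i))).mp hsum i (Finset.mem_univ i)
  exact f_eq_zero (h0 i) this

lemma herm_const_eig {d : ℕ} {M : Matrix (Fin d) (Fin d) ℂ} (h : M.IsHermitian) (c : ℝ)
    (hc : ∀ i, h.eigenvalues i = c) : M = (c : ℂ) • 1 := by
  have hsp := h.spectral_theorem
  have hd : Matrix.diagonal (RCLike.ofReal ∘ h.eigenvalues)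
      = (c : ℂ) • (1 : Matrix (Fin d) (Fin d) ℂ) := by
    ext i j
    by_cases hij : i = j <;>
      simp [Matrix.diagonal, Matrix.one_apply, hij, hc]
  rw [hsp, hd]
  have hu : (h.eigenvectorUnitary : Matrix (Fin d) (Fin d) ℂ) *
      (star h.eigenvectorUnitary : Matrix (Fin d) (Fin d) ℂ) = 1 :=
    Matrix.mem_unitaryGroup_iff.mp h.eigenvectorUnitary.2
  rw [Unitary.conjStarAlgAut_apply, Matrix.mul_smul, Matrix.smul_mul, mul_one, hu]

lemma herm_trace_eq {d : ℕ} {M : Matrix (Fin d) (Fin d) ℂ} (h : M.IsHermitian) :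
    M.trace = ∑ i, (h.eigenvalues i : ℂ) := by
  conv_lhs => rw [h.spectral_theorem]
  rw [Unitary.conjStarAlgAut_apply, Matrix.trace_mul_cycle]
  have hu : (star h.eigenvectorUnitary : Matrix (Fin d) (Fin d) ℂ) *
      (h.eigenvectorUnitary : Matrix (Fin d) (Fin d) ℂ) = 1 :=
    Matrix.mem_unitaryGroup_iff'.mp h.eigenvectorUnitary.2
  rw [hu, Matrix.one_mul, Matrix.trace_diagonal]
  rfl

lemma psdSqrt_herm {E : Matrix (Fin 4) (Fin 4) ℂ} (hE : E.PosSemidef) :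
    (psdSqrt hE).IsHermitian := by
  have hd : (diagonal ((↑) ∘ (√·) ∘ hE.1.eigenvalues : Fin 4 → ℂ)).IsHermitian := by
    ext i j
    by_cases h : i = j
    · subst h; simp [diagonal]
    · simp [diagonal, h, Ne.symm h]
  unfold psdSqrt
  simpa [Unitary.coe_star, star_eq_conjTranspose] using
    isHermitian_mul_mul_conjTranspose (hE.1.eigenvectorUnitary : Matrix (Fin 4) (Fin 4) ℂ) hd

lemma psdSqrt_mul_self {E : Matrix (Fin 4) (Fin 4) ℂ} (hE : E.PosSemidef) :
    psdSqrt hE * psdSqrt hE = E := by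
  have hu : (star hE.1.eigenvectorUnitary : Matrix (Fin 4) (Fin 4) ℂ) *
      (hE.1.eigenvectorUnitary : Matrix (Fin 4) (Fin 4) ℂ) = 1 :=
    Matrix.mem_unitaryGroup_iff'.mp hE.1.eigenvectorUnitary.2
  unfold psdSqrt
  conv_rhs => rw [hE.1.spectral_theorem, Unitary.conjStarAlgAut_apply]
  simp only [Matrix.mul_assoc]
  rw [← Matrix.mul_assoc (star hE.1.eigenvectorUnitary : Matrix (Fin 4) (Fin 4) ℂ), hu,
    Matrix.one_mul, ← Matrix.mul_assoc (diagonal _), diagonal_mul_diagonal]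
  congr 3
  funext i
  simp only [Function.comp_apply]
  rw [← Complex.ofReal_mul, Real.mul_self_sqrt (hE.eigenvalues_nonneg i)]
  rfl

set_option maxHeartbeats 4000000 in
/-- If a PSD effect `E` with positive trace preserves the orthogonality of the Bell
states `ψ_{00}, ψ_{11}, ψ_{31}, ψ_{32}`, and the normalized average Bob-side
post-measurement state has von Neumann entropy 2 bits, then `E` is a positive
scalar multiple of the identity. -/
theorem entropy_condition_forces_trivial (E : Matrix (Fin 4) (Fin 4) ℂ)
    (hE : E.PosSemidef) (htr : 0 < E.trace)
    (hOP : ∀ i j : Fin 4, i ≠ j →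
      star (bell 4 (bellIdx i).1 (bellIdx i).2) ⬝ᵥ
        ((E ⊗ₖ (1 : Matrix (Fin 4) (Fin 4) ℂ)).mulVec
          (bell 4 (bellIdx j).1 (bellIdx j).2)) = 0)
    (hherm : (rhoB E hE).IsHermitian)
    (hent : vnEntropy hherm = 2) :
    ∃ t : ℝ, 0 < t ∧ E = (t : ℂ) • (1 : Matrix (Fin 4) (Fin 4) ℂ) := by
  have him := htr
  rw [Complex.lt_def] at him
  have hrpos : 0 < E.trace.re := by simpa using him.1
  have hrim : E.trace.im = 0 := by simpa using him.2.symm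
  have htrr : E.trace = ((E.trace.re : ℝ) : ℂ) := Complex.ext rfl (by simp [hrim])
  have htrne : E.trace ≠ 0 := ne_of_gt htr
  -- positive semidefiniteness of rhoB
  have hBh : (psdSqrt hE ⊗ₖ (1:Matrix (Fin 4) (Fin 4) ℂ))ᴴ = psdSqrt hE ⊗ₖ 1 :=
    kron_one_ct (psdSqrt_herm hE)
  have hterm : ∀ s : Fin 4, ((psdSqrt hE ⊗ₖ (1:Matrix (Fin 4) (Fin 4) ℂ)) *
      outer (bell 4 (bellIdx s).1 (bellIdx s).2) * (psdSqrt hE ⊗ₖ 1)).PosSemidef := by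
    intro s
    have := (outer_posSemidef (bell 4 (bellIdx s).1 (bellIdx s).2)).mul_mul_conjTranspose_same
      (psdSqrt hE ⊗ₖ (1:Matrix (Fin 4) (Fin 4) ℂ))
    rwa [hBh] at this
  have hsumPSD : (∑ s : Fin 4,
      trA ((psdSqrt hE ⊗ₖ (1 : Matrix (Fin 4) (Fin 4) ℂ)) *
        outer (bell 4 (bellIdx s).1 (bellIdx s).2) *
        (psdSqrt hE ⊗ₖ (1 : Matrix (Fin 4) (Fin 4) ℂ)))).PosSemidef := by
    rw [Fin.sum_univ_four]
    exact (((trA_posSemidef (hterm 0)).add (trA_posSemidef (hterm 1))).add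
      (trA_posSemidef (hterm 2))).add (trA_posSemidef (hterm 3))
  have hpsd : (rhoB E hE).PosSemidef := by
    unfold rhoB
    rw [htrr, ← Complex.ofReal_inv]
    refine Matrix.PosSemidef.of_dotProduct_mulVec_nonneg ?_ ?_
    · show _ᴴ = _
      rw [conjTranspose_smul, hsumPSD.1]
      congr 1
      simp [Complex.star_def, Complex.conj_ofReal]
    · intro x
      rw [smul_mulVec, dotProduct_smul, smul_eq_mul]
      exact mul_nonneg (Complex.zero_le_real.mpr (by positivity)) (hsumPSD.dotProduct_mulVec_nonneg x)
  have h0 : ∀ i, 0 ≤ hherm.eigenvalues i := fun i => hpsd.eigenvalues_nonneg i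
  -- entry formula for rhoB
  have hsum_entry : ∀ i j, rhoB E hE i j = (E.trace)⁻¹ *
      ∑ s : Fin 4, ∑ a, ∑ b, bell 4 (bellIdx s).1 (bellIdx s).2 (a, i) *
        star (bell 4 (bellIdx s).1 (bellIdx s).2 (b, j)) * E b a := by
    intro i j
    unfold rhoB
    rw [Matrix.smul_apply, Matrix.sum_apply, smul_eq_mul]
    congr 1
    refine Finset.sum_congr rfl fun s _ => ?_
    rw [trA_conj, psdSqrt_mul_self hE]
  -- trace of rhoB is 1
  have htr1 : (rhoB E hE).trace = 1 := by
    have hbig : (∑ i : Fin 4, ∑ s : Fin 4, ∑ a, ∑ b,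
        bell 4 (bellIdx s).1 (bellIdx s).2 (a, i) *
        star (bell 4 (bellIdx s).1 (bellIdx s).2 (b, i)) * E b a) = E.trace := by
      rw [Matrix.trace]
      simp only [bellIdx, Matrix.cons_val_zero, Matrix.cons_val_one, Matrix.head_cons,
        Matrix.cons_val_two, Matrix.tail_cons, Matrix.cons_val_three]
      simp (config := { decide := true }) only [Matrix.cons_val, bell_eq, Fin.sum_univ_four, Matrix.diag_apply,
        mul_ite, ite_mul, zero_mul, mul_zero, mul_one, one_mul, if_true, if_false,
        add_zero, zero_add, Complex.star_def, map_zero, map_pow, Complex.conj_I,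
        Complex.conj_ofNat, map_div₀, _root_.map_one, Fin.val_zero, Fin.val_one, Fin.val_two,
        show ((3:Fin 4):ℕ) = 3 from rfl]
      norm_num [show ((3:Fin 4):ℕ) = 3 from rfl, conj_two, Complex.I_sq, I3, I4, I5, I6, I7, I8, I9,
        I10, I11, I12, I13, I14, I15, I16, I17, I18]
      ring_nf
      norm_num [conj_two, Complex.I_sq]
      try ring
    rw [Matrix.trace]
    simp only [Matrix.diag_apply]
    simp only [hsum_entry]
    rw [← Finset.mul_sum, hbig, inv_mul_cancel₀ htrne]
  -- eigenvalues sum to 1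
  have hsum1 : ∑ i, hherm.eigenvalues i = 1 := by
    have h' := herm_trace_eq hherm
    rw [htr1] at h'
    exact_mod_cast h'.symm
  have heig : ∀ i, hherm.eigenvalues i = 1/4 := by
    refine maxent h0 hsum1 ?_
    simpa [vnEntropy] using hent
  have hrho : rhoB E hE = ((1/4 : ℝ) : ℂ) • 1 := herm_const_eig hherm (1/4) heig
  -- entrywise equations
  have hXeq : ∀ i j, (∑ s : Fin 4, ∑ a, ∑ b, bell 4 (bellIdx s).1 (bellIdx s).2 (a, i) *
      star (bell 4 (bellIdx s).1 (bellIdx s).2 (b, j)) * E b a)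
      = E.trace * (if i = j then (1/4 : ℂ) else 0) := by
    intro i j
    have h2 : (E.trace)⁻¹ * (∑ s : Fin 4, ∑ a, ∑ b, bell 4 (bellIdx s).1 (bellIdx s).2 (a, i) *
        star (bell 4 (bellIdx s).1 (bellIdx s).2 (b, j)) * E b a)
        = if i = j then (1/4 : ℂ) else 0 := by
      rw [← hsum_entry i j, hrho]
      by_cases hij : i = j <;>
        simp [hij, Matrix.smul_apply, Matrix.one_apply] <;> norm_num
    calc (∑ s : Fin 4, ∑ a, ∑ b, bell 4 (bellIdx s).1 (bellIdx s).2 (a, i) *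
        star (bell 4 (bellIdx s).1 (bellIdx s).2 (b, j)) * E b a)
        = E.trace * ((E.trace)⁻¹ * (∑ s : Fin 4, ∑ a, ∑ b,
            bell 4 (bellIdx s).1 (bellIdx s).2 (a, i) *
            star (bell 4 (bellIdx s).1 (bellIdx s).2 (b, j)) * E b a)) := by
          rw [← mul_assoc, mul_inv_cancel₀ htrne, one_mul]
      _ = E.trace * (if i = j then (1/4 : ℂ) else 0) := by rw [h2]
  have hX00 := hXeq 0 0
  have hX11 := hXeq 1 1
  have hX02 := hXeq 0 2
  have hX13 := hXeq 1 3
  have h01 := hOP 0 1 (by decide); have h02 := hOP 0 2 (by decide)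
  have h03 := hOP 0 3 (by decide); have h10 := hOP 1 0 (by decide)
  have h12 := hOP 1 2 (by decide); have h13 := hOP 1 3 (by decide)
  have h20 := hOP 2 0 (by decide); have h23 := hOP 2 3 (by decide)
  have h30 := hOP 3 0 (by decide); have h31 := hOP 3 1 (by decide)
  have h32 := hOP 3 2 (by decide)
  simp only [bellIdx, Matrix.cons_val_zero, Matrix.cons_val_one, Matrix.head_cons,
    Matrix.cons_val_two, Matrix.tail_cons, Matrix.cons_val_three] at h01 h02 h03 h10 h12 h13 h20 h23 h30 h31 h32 hX00 hX11 hX02 hX13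
  simp (config := { decide := true }) only [Matrix.cons_val, dotProduct, mulVec, Fintype.sum_prod_type,
    Fin.sum_univ_four, bell_eq, kroneckerMap_apply, Matrix.one_apply, Pi.star_apply,
    Complex.star_def, mul_ite, ite_mul, zero_mul, mul_zero, mul_one, one_mul,
    if_true, if_false, add_zero, zero_add, map_zero, map_pow, map_div₀, _root_.map_one,
    Complex.conj_I, Complex.conj_ofNat, Fin.val_zero, Fin.val_one, Fin.val_two,
    show ((3:Fin 4):ℕ) = 3 from rfl] at h01 h02 h03 h10 h12 h13 h20 h23 h30 h31 h32 hX00 hX11 hX02 hX13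
  norm_num [show ((3:Fin 4):ℕ) = 3 from rfl, conj_two, Complex.I_sq, I3, I4, I5, I6, I7, I8, I9,
    I10, I11, I12, I13, I14, I15, I16, I17, I18] at h01 h02 h03 h10 h12 h13 h20 h23 h30 h31 h32 hX00 hX11 hX02 hX13
  have htrdef : E.trace = E 0 0 + E 1 1 + E 2 2 + E 3 3 := by
    rw [Matrix.trace, Fin.sum_univ_four]; rfl
  -- off-diagonal entries adjacent to the diagonal vanish
  have z10 : E 1 0 = 0 := by
    linear_combination h01 + h02 - Complex.I * h23 + Complex.I * h13 +
      ((E 1 0 + E 3 2)/2) * Complex.I_sq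
  have z32 : E 3 2 = 0 := by
    linear_combination -h01 - h02 - Complex.I * h23 + Complex.I * h13 +
      ((E 1 0 + E 3 2)/2) * Complex.I_sq
  have z21 : E 2 1 = 0 := by
    linear_combination -Complex.I * h01 + Complex.I * h02 - Complex.I * h13 -
      Complex.I * h23 + (E 2 1) * Complex.I_sq
  have z03 : E 0 3 = 0 := by
    linear_combination Complex.I * h01 - Complex.I * h02 - Complex.I * h13 -
      Complex.I * h23 + (E 0 3) * Complex.I_sq
  have z01 : E 0 1 = 0 := by
    linear_combination h10 + h20 - Complex.I * h31 + Complex.I * h32 +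
      ((E 0 1 + E 2 3)/2) * Complex.I_sq
  have z23 : E 2 3 = 0 := by
    linear_combination -h10 - h20 - Complex.I * h31 + Complex.I * h32 +
      ((E 0 1 + E 2 3)/2) * Complex.I_sq
  have z12 : E 1 2 = 0 := by
    linear_combination Complex.I * h31 + Complex.I * h32 + Complex.I * h10 -
      Complex.I * h20 + (E 1 2) * Complex.I_sq
  have z30 : E 3 0 = 0 := by
    linear_combination Complex.I * h31 + Complex.I * h32 - Complex.I * h10 +
      Complex.I * h20 + (E 3 0) * Complex.I_sq
  -- the distance-two entries
  have s02 : E 0 2 = E 2 0 := by linear_combination 2*h30 - 2*h03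
  have s13 : E 1 3 = E 3 1 := by
    linear_combination -2*Complex.I*h03 - 2*Complex.I*h30 + (E 1 3 - E 3 1)*Complex.I_sq
  have z13 : E 1 3 = 0 := by
    linear_combination -2*hX02 - (1/2)*s02 + (E 1 3)*Complex.I_sq
  have z31 : E 3 1 = 0 := by linear_combination z13 - s13
  have z20 : E 2 0 = 0 := by
    linear_combination -2*hX13 + (1/2)*z31 + (Complex.I^2/2)*z13
  have z02 : E 0 2 = 0 := by linear_combination s02 + z20
  -- diagonal entries
  have e1 : E 0 0 + 2 * E 3 3 + E 2 2 = E.trace := by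
    linear_combination 4*hX00 + 2*(E 3 3)*Complex.I_sq
  have e2 : E 1 1 + 2 * E 0 0 + E 3 3 = E.trace := by
    linear_combination 4*hX11 + (E 3 3)*Complex.I_sq
  have e3 : E 0 0 + E 2 2 = E 1 1 + E 3 3 := by
    linear_combination 4*h12 - (E 1 1 + E 3 3)*Complex.I_sq
  have f1 : E 3 3 = E 1 1 := by linear_combination e1 + htrdef
  have f2 : E 0 0 = E 2 2 := by linear_combination e2 + htrdef
  have f3 : E 0 0 = E 1 1 := by linear_combination (1/2)*e3 + (1/2)*f2 + (1/2)*f1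
  have q : 4 * E 0 0 = E.trace := by linear_combination 2*f3 + f2 - f1 - htrdef
  refine ⟨E.trace.re / 4, by positivity, ?_⟩
  ext i j
  fin_cases i <;> fin_cases j <;>
    simp only [Matrix.smul_apply, Matrix.one_apply, smul_eq_mul, mul_one, mul_zero] <;>
    push_cast
  · linear_combination (1/4)*q + (1/4)*htrr
  · simpa using z01
  · simpa using z02
  · simpa using z03
  · simpa using z10
  · linear_combination -f3 + (1/4)*q + (1/4)*htrr
  · simpa using z12
  · simpa using z13
  · simpa using z20
  · simpa using z21
  · linear_combination -f2 + (1/4)*q + (1/4)*htrr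
  · simpa using z23
  · simpa using z30
  · simpa using z31
  · simpa using z32
  · linear_combination f1 - f3 + (1/4)*q + (1/4)*htrr
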